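/- Let Z be a standard normal random variable, θ ≥ 0, and define g(θ, c) = E(|θ + Z| − θ ∣ |θ + Z| ≥ c) for c > 0. Then for fixed θ ≥ 0, g(θ, c) is an increasing function of c on (0, ∞). -/

import Mathlib

open MeasureTheory ProbabilityTheory

/-- The standard normal distribution. -/
noncomputable def stdNormal : Measure ℝ := gaussianReal 0 1

instance : IsProbabilityMeasure stdNormal := by
  unfold stdNormal; infer_instance

/-- `g(θ, c) = E(|θ + Z| − θ ∣ |θ + Z| ≥ c)` for `Z` standard normal, where
`E(X ∣ A) = E(X·1_A)/P(A)`. -/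
noncomputable def g (θ c : ℝ) : ℝ :=
  (∫ x in {x : ℝ | c ≤ |θ + x|}, (|θ + x| - θ) ∂stdNormal)
    / (stdNormal {x : ℝ | c ≤ |θ + x|}).toReal

lemma integrable_abs_add (θ : ℝ) : Integrable (fun x => |θ + x| - θ) stdNormal := by
  have h1 : Integrable (fun x => |θ + x|) stdNormal := by
    rw [stdNormal, gaussianReal_of_var_ne_zero 0 one_ne_zero]
    rw [integrable_withDensity_iff (measurable_gaussianPDF 0 1)
      (ae_of_all _ fun x => ENNReal.ofReal_lt_top)]
    have hbound : Integrable (fun x : ℝ =>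
        |θ| * gaussianPDFReal 0 1 x + |x| * gaussianPDFReal 0 1 x) volume := by
      apply Integrable.add
      · exact (integrable_gaussianPDFReal 0 1).const_mul _
      · have := (integrable_mul_exp_neg_mul_sq (b := (2 * (1:ℝ))⁻¹) (by norm_num)).abs
        have h2 : Integrable (fun x : ℝ => |x| * Real.exp (-(2 * (1:ℝ))⁻¹ * x ^ 2))
            volume := by
          refine this.congr (ae_of_all _ fun x => ?_)
          simp only []
          rw [abs_mul, abs_of_pos (Real.exp_pos _)]
        have h3 := h2.const_mul ((Real.sqrt (2 * Real.pi * 1))⁻¹)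
        refine h3.congr (ae_of_all _ fun x => ?_)
        unfold gaussianPDFReal
        push_cast
        ring_nf
      --
    refine hbound.mono' ?_ (ae_of_all _ fun x => ?_)
    · apply Measurable.aestronglyMeasurable
      apply Measurable.mul
      · exact (measurable_const.add measurable_id).abs
      · exact (measurable_gaussianPDF 0 1).ennreal_toReal
    · have hpdf : (gaussianPDF 0 1 x).toReal = gaussianPDFReal 0 1 x := by
        rw [gaussianPDF, ENNReal.toReal_ofReal (gaussianPDFReal_nonneg 0 1 x)]
      rw [Real.norm_eq_abs, hpdf, abs_mul, abs_abs,
        abs_of_nonneg (gaussianPDFReal_nonneg 0 1 x)]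
      have : |θ + x| ≤ |θ| + |x| := abs_add_le θ x
      nlinarith [gaussianPDFReal_nonneg 0 1 x]
  exact h1.sub (integrable_const θ)

lemma stdNormal_set_pos (θ c : ℝ) : 0 < stdNormal {x : ℝ | c ≤ |θ + x|} := by
  by_contra h
  push_neg at h
  have h0 : stdNormal {x : ℝ | c ≤ |θ + x|} = 0 := le_antisymm h zero_le
  have hv : (volume : Measure ℝ) {x : ℝ | c ≤ |θ + x|} = 0 :=
    gaussianReal_absolutelyContinuous' 0 one_ne_zero h0
  have hsub : Set.Ici (c - θ) ⊆ {x : ℝ | c ≤ |θ + x|} := by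
    intro x hx
    have : c ≤ θ + x := by simpa [Set.mem_Ici] using by linarith [hx.out]
    exact le_trans this (le_abs_self _)
  have := measure_mono_null hsub hv
  simp [Real.volume_Ici] at this

/-- For fixed `θ ≥ 0`, `g(θ, c)` is an increasing function of `c` on `(0, ∞)`. -/
theorem g_monotone_in_c (θ : ℝ) (hθ : 0 ≤ θ) :
    MonotoneOn (fun c => g θ c) (Set.Ioi (0 : ℝ)) := by
  intro c1 _ c2 _ h12
  simp only [g]
  set f : ℝ → ℝ := fun x => |θ + x| - θ with hf
  set S : ℝ → Set ℝ := fun c => {x : ℝ | c ≤ |θ + x|} with hS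
  have hmeas : ∀ c, MeasurableSet (S c) := fun c =>
    measurableSet_le measurable_const (measurable_const.add measurable_id).abs
  have hsub : S c2 ⊆ S c1 := fun x hx => le_trans h12 hx
  have hfin : ∀ (s : Set ℝ), stdNormal s ≠ ⊤ := fun s => measure_ne_top _ _
  have hInt : Integrable f stdNormal := integrable_abs_add θ
  set A : Set ℝ := S c1 \ S c2 with hA
  set p : ℝ := (stdNormal A).toReal with hp
  set q : ℝ := (stdNormal (S c2)).toReal with hq
  have hq_pos : 0 < q := ENNReal.toReal_pos (stdNormal_set_pos θ c2).ne' (hfin _)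
  have hp_nonneg : 0 ≤ p := ENNReal.toReal_nonneg
  set a : ℝ := ∫ x in A, f x ∂stdNormal with ha
  set b : ℝ := ∫ x in S c2, f x ∂stdNormal with hb
  have hdisj : Disjoint A (S c2) := Set.disjoint_sdiff_left
  have hsplit_int : (∫ x in S c1, f x ∂stdNormal) = a + b := by
    rw [← Set.diff_union_of_subset hsub,
      setIntegral_union hdisj (hmeas c2) hInt.integrableOn hInt.integrableOn]
  have hsplit_meas : (stdNormal (S c1)).toReal = p + q := by
    rw [← Set.diff_union_of_subset hsub, measure_union hdisj (hmeas c2),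
      ENNReal.toReal_add (hfin _) (hfin _)]
  have hbound_a : a ≤ (c2 - θ) * p := by
    have : a ≤ ∫ x in A, (c2 - θ) ∂stdNormal := by
      refine setIntegral_mono_on hInt.integrableOn ((integrableOn_const_iff).mpr ?_)
        ((hmeas c1).diff (hmeas c2)) (fun x hx => ?_)
      · right; exact (hfin _).lt_top
      · have : ¬ (c2 ≤ |θ + x|) := hx.2
        simp only [f]
        linarith [not_le.mp this]
    rwa [setIntegral_const, smul_eq_mul, mul_comm] at this
  have hbound_b : (c2 - θ) * q ≤ b := by
    have : (∫ x in S c2, (c2 - θ) ∂stdNormal) ≤ b := by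
      refine setIntegral_mono_on ((integrableOn_const_iff).mpr ?_) hInt.integrableOn
        (hmeas c2) (fun x hx => ?_)
      · right; exact (hfin _).lt_top
      · have : c2 ≤ |θ + x| := hx
        simp only [f]; linarith
    rwa [setIntegral_const, smul_eq_mul, mul_comm] at this
  rw [hsplit_int, hsplit_meas]
  rw [div_le_div_iff₀ (by linarith) hq_pos]
  nlinarith [mul_le_mul_of_nonneg_right hbound_a (le_of_lt hq_pos),
    mul_le_mul_of_nonneg_right hbound_b hp_nonneg]
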